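/- Let N ∈ ℝ^{r×r} be symmetric positive definite, ε ∈ {−1,+1}^r, and set M = P N Pᵀ and sample labels y_i = ε_{τ(i)}. Then: (i) the unique minimizer c of D_M over [0,1]^n is block-constant, that is c_i = θ_{τ(i)} for some θ ∈ (0,1)^r; and (ii) for every a ∈ {1,…,r}, with m_a = (N_{a,τ(i)})_{i=1}^n, one has (1/(λn))·m_aᵀ(y⊙c) = g_a, where g ∈ ℝ^r is the unique minimizer of Φ_{p̂,λ} with weights p̂ and labels ε. -/

import Mathlib

open Matrix Set Finset

/-- Binary entropy potential, with Lean's convention `Real.log 0 = 0`. -/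
noncomputable def phiEnt (c : ℝ) : ℝ := c * Real.log c + (1 - c) * Real.log (1 - c)

/-- Logistic loss `ℓ(u) = log(1 + e^{−u})`. -/
noncomputable def logLoss (u : ℝ) : ℝ := Real.log (1 + Real.exp (-u))

/-- The dual objective
`D_K(c) = (1/n)·∑ᵢ φ(cᵢ) + (1/(2λn²))·(y⊙c)ᵀ K (y⊙c)`. -/
noncomputable def dualObj {n : ℕ} (lam : ℝ) (y : Fin n → ℝ)
    (K : Matrix (Fin n) (Fin n) ℝ) (c : Fin n → ℝ) : ℝ :=
  (1 / n) * ∑ i, phiEnt (c i) +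
    (1 / (2 * lam * (n : ℝ) ^ 2)) * ((fun i => y i * c i) ⬝ᵥ (K *ᵥ fun i => y i * c i))

/-- Finite-template objective
`Φ_{q,λ}(g) = ∑ₐ q_a·ℓ(ε_a·g_a) + (λ/2)·gᵀ N⁻¹ g`. -/
noncomputable def templateObj {r : ℕ} (N : Matrix (Fin r) (Fin r) ℝ)
    (ε q : Fin r → ℝ) (lam : ℝ) (g : Fin r → ℝ) : ℝ :=
  ∑ a, q a * logLoss (ε a * g a) + (lam / 2) * (g ⬝ᵥ (N⁻¹ *ᵥ g))



lemma phiEnt_zero : phiEnt 0 = 0 := by simp [phiEnt]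

lemma phiEnt_symm (s : ℝ) : phiEnt (1 - s) = phiEnt s := by
  simp [phiEnt]; ring_nf

lemma hasDerivAt_phiEnt {x : ℝ} (h0 : 0 < x) (h1 : x < 1) :
    HasDerivAt phiEnt (Real.log x - Real.log (1 - x)) x := by
  have h1' : 0 < 1 - x := by linarith
  have hA : HasDerivAt (fun t : ℝ => t * Real.log t) (Real.log x + 1) x := by
    have := (hasDerivAt_id x).mul (Real.hasDerivAt_log h0.ne')
    exact this.congr_deriv (by simp [mul_inv_cancel₀ h0.ne'])
  have hB : HasDerivAt (fun t : ℝ => (1 - t) * Real.log (1 - t))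
      (-(Real.log (1 - x) + 1)) x := by
    have hsub : HasDerivAt (fun t : ℝ => 1 - t) (-1) x := by
      exact ((hasDerivAt_const x (1:ℝ)).sub (hasDerivAt_id x)).congr_deriv (by ring)
    have hlog : HasDerivAt (fun t : ℝ => Real.log (1 - t)) ((1 - x)⁻¹ * (-1)) x :=
      (Real.hasDerivAt_log h1'.ne').comp x hsub
    have := hsub.mul hlog
    have hx : (1 - x) * ((1 - x)⁻¹ * (-1)) = -1 := by
      field_simp
    rw [hx] at this
    refine this.congr_deriv ?_
    ring
  have := hA.add hB
  refine this.congr_deriv ?_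
  ring

lemma phiEnt_le_mul_log {s : ℝ} (h0 : 0 < s) (h1 : s < 1) :
    phiEnt s ≤ s * Real.log s := by
  have h1' : 0 < 1 - s := by linarith
  have hl : Real.log (1 - s) ≤ 0 := Real.log_nonpos (by linarith) (by linarith)
  have key : (1 - s) * Real.log (1 - s) ≤ 0 :=
    mul_nonpos_of_nonneg_of_nonpos (by linarith) hl
  simp only [phiEnt]; linarith

lemma exists_small_entropy (ν a b : ℝ) (hν : 0 < ν) :
    ∃ s : ℝ, s ∈ Ioo (0:ℝ) 1 ∧ (1/ν) * phiEnt s + a * s + b * s^2 < 0 := by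
  set C : ℝ := |a| + |b| + 1 with hC
  have hCpos : 0 < C := by positivity
  set s : ℝ := min (1/2) (Real.exp (-(ν * C))) with hs
  have hspos : 0 < s := lt_min (by norm_num) (Real.exp_pos _)
  have hs1 : s < 1 := lt_of_le_of_lt (min_le_left _ _) (by norm_num)
  have hslog : Real.log s ≤ -(ν * C) := by
    calc Real.log s ≤ Real.log (Real.exp (-(ν * C))) :=
          Real.log_le_log hspos (min_le_right _ _)
    _ = -(ν * C) := Real.log_exp _
  refine ⟨s, ⟨hspos, hs1⟩, ?_⟩
  have h1 : (1/ν) * phiEnt s ≤ (1/ν) * (s * Real.log s) := by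
    apply mul_le_mul_of_nonneg_left (phiEnt_le_mul_log hspos hs1) (by positivity)
  have h2 : s * Real.log s ≤ s * (-(ν * C)) :=
    mul_le_mul_of_nonneg_left hslog hspos.le
  have h3 : (1/ν) * (s * (-(ν * C))) = -(s * C) := by field_simp
  have h4 : a * s ≤ |a| * s := mul_le_mul_of_nonneg_right (le_abs_self a) hspos.le
  have h5 : b * s^2 ≤ |b| * s := by
    have hss : s^2 ≤ s := by nlinarith
    have h5a : b * s^2 ≤ |b| * s^2 :=
      mul_le_mul_of_nonneg_right (le_abs_self b) (by positivity)
    have h5b : |b| * s^2 ≤ |b| * s := mul_le_mul_of_nonneg_left hss (abs_nonneg b)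
    linarith
  have h2' : (1/ν) * (s * Real.log s) ≤ (1/ν) * (s * (-(ν * C))) :=
    mul_le_mul_of_nonneg_left h2 (by positivity)
  have hexp : s * C = s * |a| + s * |b| + s := by rw [hC]; ring
  nlinarith

lemma hasDerivAt_logLoss (u : ℝ) :
    HasDerivAt logLoss (-(Real.exp (-u) / (1 + Real.exp (-u)))) u := by
  have hpos : 0 < 1 + Real.exp (-u) := by positivity
  have h1 : HasDerivAt (fun t : ℝ => 1 + Real.exp (-t)) (-Real.exp (-u)) u := by
    have hneg : HasDerivAt (fun t : ℝ => -t) (-1) u := by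
      exact (hasDerivAt_id u).neg
    have := (Real.hasDerivAt_exp (-u)).comp u hneg
    exact (((Real.hasDerivAt_exp (-u)).comp u hneg).const_add 1).congr_deriv (by ring)
  have := (Real.hasDerivAt_log hpos.ne').comp u h1
  refine this.congr_deriv ?_
  ring

lemma hasDerivAt_logLoss' (u : ℝ) :
    HasDerivAt (fun v : ℝ => -(Real.exp (-v) / (1 + Real.exp (-v))))
      (Real.exp (-u) / (1 + Real.exp (-u))^2) u := by
  have hpos : 0 < 1 + Real.exp (-u) := by positivity
  have h1 : HasDerivAt (fun v : ℝ => Real.exp (-v)) (-Real.exp (-u)) u := by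
    have hneg : HasDerivAt (fun t : ℝ => -t) (-1) u := by
      exact (hasDerivAt_id u).neg
    exact ((Real.hasDerivAt_exp (-u)).comp u hneg).congr_deriv (by ring)
  have h2 : HasDerivAt (fun v : ℝ => 1 + Real.exp (-v)) (-Real.exp (-u)) u := by
    exact h1.const_add 1
  have h3 := h2.inv hpos.ne'
  have h4 := h1.mul h3
  have := h4.neg
  refine this.congr_deriv ?_
  simp only [Pi.inv_apply]
  field_simp
  ring

lemma convexOn_logLoss : ConvexOn ℝ Set.univ logLoss := by
  have hdl : deriv logLoss = fun v : ℝ => -(Real.exp (-v) / (1 + Real.exp (-v))) :=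
    funext fun u => (hasDerivAt_logLoss u).deriv
  apply convexOn_univ_of_deriv2_nonneg
  · exact fun u => (hasDerivAt_logLoss u).differentiableAt
  · intro u
    rw [hdl]
    exact (hasDerivAt_logLoss' u).differentiableAt
  · intro u
    have : deriv^[2] logLoss u = Real.exp (-u) / (1 + Real.exp (-u))^2 := by
      have : deriv^[2] logLoss u = deriv (deriv logLoss) u := by
        simp [Function.iterate_succ, Function.comp]
      rw [this, hdl, (hasDerivAt_logLoss' u).deriv]
    rw [this]
    positivity

lemma logLoss_first_order (u v : ℝ) :
    logLoss u + (-(Real.exp (-u) / (1 + Real.exp (-u)))) * (v - u) ≤ logLoss v := by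
  have hder := hasDerivAt_logLoss u
  rcases lt_trichotomy u v with h | h | h
  · have := convexOn_logLoss.le_slope_of_hasDerivAt (mem_univ u) (mem_univ v) h hder
    rw [slope_def_field] at this
    have hvu : 0 < v - u := by linarith
    have := (le_div_iff₀ hvu).mp this
    linarith
  · simp [h]
  · have := convexOn_logLoss.slope_le_of_hasDerivAt (mem_univ v) (mem_univ u) h hder
    rw [slope_def_field] at this
    have huv : 0 < u - v := by linarith
    have := (div_le_iff₀ huv).mp this
    nlinarith

lemma dotProduct_mulVec_symm {m : ℕ} (A : Matrix (Fin m) (Fin m) ℝ)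
    (hA : ∀ i j, A i j = A j i) (x y : Fin m → ℝ) :
    x ⬝ᵥ (A *ᵥ y) = y ⬝ᵥ (A *ᵥ x) := by
  simp only [dotProduct, Matrix.mulVec]
  calc ∑ i, x i * ∑ j, A i j * y j = ∑ i, ∑ j, x i * (A i j * y j) := by
        simp [Finset.mul_sum]
    _ = ∑ j, ∑ i, x i * (A i j * y j) := Finset.sum_comm
    _ = ∑ j, y j * ∑ i, A j i * x i := by
        refine Finset.sum_congr rfl fun j _ => ?_
        rw [Finset.mul_sum]
        refine Finset.sum_congr rfl fun i _ => ?_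
        rw [hA j i]; ring

lemma quad_update {m : ℕ} (A : Matrix (Fin m) (Fin m) ℝ)
    (hA : ∀ i j, A i j = A j i) (v : Fin m → ℝ) (i : Fin m) (s : ℝ) :
    (Function.update v i (v i + s)) ⬝ᵥ (A *ᵥ (Function.update v i (v i + s))) =
      v ⬝ᵥ (A *ᵥ v) + 2 * s * (A *ᵥ v) i + s^2 * A i i := by
  have hupd : Function.update v i (v i + s) = v + Pi.single i s := by
    funext k; by_cases hk : k = i
    · subst hk; simp
    · simp [Function.update_of_ne hk, Pi.single_eq_of_ne hk]
  rw [hupd, Matrix.mulVec_add, add_dotProduct, dotProduct_add,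
    dotProduct_add]
  have e1 : Pi.single i s ⬝ᵥ (A *ᵥ v) = s * (A *ᵥ v) i := single_dotProduct _ _ _
  have e2 : v ⬝ᵥ (A *ᵥ Pi.single i s) = s * (A *ᵥ v) i := by
    rw [dotProduct_mulVec_symm A hA]; exact e1
  have e3 : Pi.single i s ⬝ᵥ (A *ᵥ Pi.single i s) = s^2 * A i i := by
    rw [Matrix.mulVec_single, single_dotProduct]
    simp
    ring
  rw [e1, e2, e3]; ring

set_option maxHeartbeats 1600000 in
/-- Exact ideal block reduction: for the block-constant ideal Gram matrix
`M = P N Pᵀ`, the unique dual minimizer `c` of `D_M` is block-constant with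
values in `(0,1)`, and the ideal score `(1/(λn))·m_aᵀ(y⊙c)` equals the `a`-th
coordinate of the unique minimizer of the finite-template objective `Φ_{p̂,λ}`. -/
theorem ideal_block_reduction
    {n r : ℕ} (hn : 0 < n) (hr : 0 < r) (lam : ℝ) (hlam : 0 < lam)
    (τ : Fin n → Fin r) (hτ : Function.Surjective τ)
    (P : Matrix (Fin n) (Fin r) ℝ)
    (hP : ∀ i b, P i b = if τ i = b then 1 else 0)
    (phat : Fin r → ℝ)
    (hphat : ∀ b, phat b = ((univ.filter (fun i => τ i = b)).card : ℝ) / n)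
    (N : Matrix (Fin r) (Fin r) ℝ) (hN : N.PosDef)
    (ε : Fin r → ℝ) (hε : ∀ a, ε a = 1 ∨ ε a = -1)
    (y : Fin n → ℝ) (hy : ∀ i, y i = ε (τ i))
    (M : Matrix (Fin n) (Fin n) ℝ) (hM : M = P * N * Pᵀ)
    (c : Fin n → ℝ)
    (hc : (∀ i, c i ∈ Icc (0:ℝ) 1) ∧
      IsMinOn (dualObj lam y M) {c' | ∀ i, c' i ∈ Icc (0:ℝ) 1} c) :
    (∃ θ : Fin r → ℝ, (∀ b, θ b ∈ Ioo (0:ℝ) 1) ∧ ∀ i, c i = θ (τ i)) ∧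
    (∀ a : Fin r, ∀ g : Fin r → ℝ,
      IsMinOn (templateObj N ε phat lam) univ g →
        (1 / (lam * n)) * ((fun i => N a (τ i)) ⬝ᵥ fun i => y i * c i) = g a) := by
  have hn' : (0:ℝ) < n := by exact_mod_cast hn
  have hy1 : ∀ i, y i * y i = 1 := by
    intro i; rcases hε (τ i) with h | h <;> rw [hy i, h] <;> norm_num
  have hNsymm : ∀ a b, N a b = N b a := by
    intro a b
    have h := congrFun (congrFun hN.1 a) b
    simpa [Matrix.conjTranspose_apply] using h.symm
  have hMij : ∀ i j, M i j = N (τ i) (τ j) := by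
    intro i j
    subst hM
    simp [Matrix.mul_apply, Matrix.transpose_apply, hP, ite_mul, mul_ite,
      one_mul, mul_one, zero_mul, mul_zero, Finset.sum_ite_eq, Finset.sum_ite_eq']
  have hMsymm : ∀ i j, M i j = M j i := by
    intro i j; rw [hMij, hMij, hNsymm]
  set v : Fin n → ℝ := fun i => y i * c i with hv
  -- key expansion of the dual objective under a single-coordinate update
  have key_expand : ∀ (i : Fin n) (t : ℝ),
      dualObj lam y M (Function.update c i t) = dualObj lam y M c
        + (1/(n:ℝ)) * (phiEnt t - phiEnt (c i))
        + (1/(2*lam*(n:ℝ)^2)) * (2*(y i*(t - c i)) * ((M *ᵥ v) i)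
            + (y i*(t - c i))^2 * M i i) := by
    intro i t
    have hent : ∑ k, phiEnt (Function.update c i t k)
        = ∑ k, phiEnt (c k) + (phiEnt t - phiEnt (c i)) := by
      have h1 : (fun k => phiEnt (Function.update c i t k))
          = Function.update (fun k => phiEnt (c k)) i (phiEnt t) := by
        funext k
        by_cases hk : k = i
        · subst hk; simp
        · simp [Function.update_of_ne hk]
      rw [h1, Finset.sum_update_of_mem (Finset.mem_univ i)]
      have h2 : ∑ k, phiEnt (c k)
          = phiEnt (c i) + ∑ k ∈ univ \ {i}, phiEnt (c k) := by
        rw [Finset.sum_eq_sum_sdiff_singleton_add (Finset.mem_univ i)]; ring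
      rw [h2]; ring
    have hq : (fun k => y k * Function.update c i t k)
        = Function.update v i (v i + y i * (t - c i)) := by
      funext k
      by_cases hk : k = i
      · subst hk; simp [hv]; ring
      · simp [Function.update_of_ne hk, hv]
    simp only [dualObj]
    rw [hent, hq, quad_update M hMsymm v i (y i * (t - c i))]
    ring
  -- interiority
  have hint : ∀ i, c i ∈ Ioo (0:ℝ) 1 := by
    intro i
    rcases hc.1 i with ⟨hge, hle⟩
    by_contra hcon
    rw [Set.mem_Ioo] at hcon
    push_neg at hcon
    have hcase : c i = 0 ∨ c i = 1 := by
      rcases lt_or_eq_of_le hge with h | h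
      · right; rcases lt_or_eq_of_le hle with h' | h'
        · exact absurd (hcon h) (not_le.mpr h')
        · exact h'
      · left; exact h.symm
    rcases hcase with h0 | h1
    · -- c i = 0 : push up
      obtain ⟨s, hsIoo, hneg⟩ := exists_small_entropy n
        ((1/(2*lam*(n:ℝ)^2)) * (2 * y i * ((M *ᵥ v) i)))
        ((1/(2*lam*(n:ℝ)^2)) * M i i) hn'
      have hbox : (Function.update c i s) ∈ {c' : Fin n → ℝ | ∀ k, c' k ∈ Icc (0:ℝ) 1} := by
        intro k
        by_cases hk : k = i
        · subst hk; simp; exact ⟨hsIoo.1.le, hsIoo.2.le⟩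
        · simp [Function.update_of_ne hk]; exact hc.1 k
      have hmin := isMinOn_iff.mp hc.2 _ hbox
      rw [key_expand i s, h0] at hmin
      have hsq : (y i * (s - 0))^2 = s^2 := by
        have := hy1 i; nlinarith [this]
      rw [hsq] at hmin
      rw [phiEnt_zero] at hmin
      nlinarith [hmin, hneg]
    · -- c i = 1 : push down
      obtain ⟨s, hsIoo, hneg⟩ := exists_small_entropy n
        (-((1/(2*lam*(n:ℝ)^2)) * (2 * y i * ((M *ᵥ v) i))))
        ((1/(2*lam*(n:ℝ)^2)) * M i i) hn'
      have hbox : (Function.update c i (1 - s)) ∈ {c' : Fin n → ℝ | ∀ k, c' k ∈ Icc (0:ℝ) 1} := by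
        intro k
        by_cases hk : k = i
        · subst hk; simp; constructor <;> linarith [hsIoo.1, hsIoo.2]
        · simp [Function.update_of_ne hk]; exact hc.1 k
      have hmin := isMinOn_iff.mp hc.2 _ hbox
      rw [key_expand i (1 - s), h1] at hmin
      have hsq : (y i * (1 - s - 1))^2 = s^2 := by
        have := hy1 i; nlinarith [this]
      rw [hsq] at hmin
      have hone : phiEnt 1 = 0 := by simp [phiEnt]
      rw [phiEnt_symm, hone] at hmin
      nlinarith [hmin, hneg]
  -- stationarity
  have hstat : ∀ i, Real.log (c i) - Real.log (1 - c i)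
      = -(y i * ((1/(lam*(n:ℝ))) * ((M *ᵥ v) i))) := by
    intro i
    obtain ⟨h0, h1⟩ := hint i
    set W : ℝ := (M *ᵥ v) i with hW
    set f : ℝ → ℝ := fun t => (1/(n:ℝ)) * phiEnt t
      + (1/(2*lam*(n:ℝ)^2)) * (2*(y i*(t - c i)) * W + (y i*(t - c i))^2 * M i i) with hf
    have hfc : f (c i) = (1/(n:ℝ)) * phiEnt (c i) := by
      simp [hf]
    have hminloc : IsLocalMin f (c i) := by
      have hmem : Ioo (0:ℝ) 1 ∈ nhds (c i) := Ioo_mem_nhds h0 h1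
      filter_upwards [hmem] with t ht
      have hbox : (Function.update c i t) ∈ {c' : Fin n → ℝ | ∀ k, c' k ∈ Icc (0:ℝ) 1} := by
        intro k
        by_cases hk : k = i
        · subst hk; simp; exact ⟨ht.1.le, ht.2.le⟩
        · simp [Function.update_of_ne hk]; exact hc.1 k
      have hmin := isMinOn_iff.mp hc.2 _ hbox
      rw [key_expand i t] at hmin
      rw [hfc]
      simp only [hf]
      linarith [hmin]
    have hder : HasDerivAt f
        ((1/(n:ℝ)) * (Real.log (c i) - Real.log (1 - c i))
          + (1/(2*lam*(n:ℝ)^2)) * (2 * y i * W)) (c i) := by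
      have hA : HasDerivAt (fun t : ℝ => (1/(n:ℝ)) * phiEnt t)
          ((1/(n:ℝ)) * (Real.log (c i) - Real.log (1 - c i))) (c i) :=
        (hasDerivAt_phiEnt h0 h1).const_mul _
      have hid : HasDerivAt (fun t : ℝ => y i * (t - c i)) (y i) (c i) := by
        simpa using ((hasDerivAt_id (c i)).sub_const (c i)).const_mul (y i)
      have h3 : HasDerivAt (fun t : ℝ => 2*(y i*(t - c i)) * W) (2 * y i * W) (c i) := by
        have := (hid.const_mul (2:ℝ)).mul_const W
        convert this using 1 <;> ring
      have h4 : HasDerivAt (fun t : ℝ => (y i*(t - c i))^2 * M i i) 0 (c i) := by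
        have := (hid.pow 2).mul_const (M i i)
        refine this.congr_deriv ?_; simp
      have hB := (h3.add h4).const_mul ((1:ℝ)/(2*lam*(n:ℝ)^2))
      have := hA.add hB
      refine this.congr_deriv ?_; ring
    have hd0 : (1/(n:ℝ)) * (Real.log (c i) - Real.log (1 - c i))
        + (1/(2*lam*(n:ℝ)^2)) * (2 * y i * W) = 0 := by
      rw [← hder.deriv]; exact hminloc.deriv_eq_zero
    have hlamn : lam * (n:ℝ) ≠ 0 := by positivity
    field_simp at hd0
    rw [show -(y i * ((1/(lam*(n:ℝ))) * W)) = -(y i * W) / (lam * (n:ℝ)) by ring,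
      eq_div_iff (by positivity : lam * (n:ℝ) ≠ 0)]
    apply mul_right_cancel₀ (show (2*(n:ℝ)) ≠ 0 by positivity)
    linear_combination (2*(n:ℝ)) * hd0
  -- explicit formula for c
  set Gsum : Fin r → ℝ := fun a => ∑ j, N a (τ j) * (y j * c j) with hGsum
  set G : Fin r → ℝ := fun a => (1/(lam*(n:ℝ))) * Gsum a with hG
  have hMvi : ∀ i, (M *ᵥ v) i = Gsum (τ i) := by
    intro i
    simp only [Matrix.mulVec, dotProduct, hGsum, hv]
    exact Finset.sum_congr rfl fun j _ => by rw [hMij]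
  set θ : Fin r → ℝ := fun b => 1/(1 + Real.exp (ε b * G b)) with hθ
  have hform : ∀ i, c i = θ (τ i) := by
    intro i
    obtain ⟨h0, h1⟩ := hint i
    have h1' : (0:ℝ) < 1 - c i := by linarith
    have hst := hstat i
    rw [hMvi i] at hst
    have hexp := congrArg Real.exp hst
    rw [Real.exp_sub, Real.exp_log h0, Real.exp_log h1'] at hexp
    set w : ℝ := y i * G (τ i) with hw
    have hE1 : Real.exp (-w) * Real.exp w = 1 := by
      rw [← Real.exp_add]; simp
    rw [div_eq_iff h1'.ne'] at hexp
    have h2 : c i * Real.exp w = 1 - c i := by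
      calc c i * Real.exp w = (Real.exp (-w) * (1 - c i)) * Real.exp w := by conv_lhs => rw [hexp]
        _ = (1 - c i) * (Real.exp (-w) * Real.exp w) := by ring
        _ = 1 - c i := by rw [hE1]; ring
    have hyi : y i = ε (τ i) := hy i
    have : c i = 1/(1 + Real.exp w) := by
      rw [eq_div_iff (by positivity)]
      linarith
    rw [this, hθ]
    simp [hw, hyi]
  refine ⟨⟨θ, ?_, hform⟩, ?_⟩
  · intro b
    constructor
    · rw [hθ]; positivity
    · rw [hθ, div_lt_one (by positivity)]
      linarith [Real.exp_pos (ε b * G b)]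
  · -- part (ii)
    intro a g hg
    set A : Matrix (Fin r) (Fin r) ℝ := N⁻¹ with hA
    have hApos : A.PosDef := hN.inv
    have hAsymm : ∀ i j, A i j = A j i := by
      intro i j
      have h := congrFun (congrFun hApos.1 i) j
      simpa [Matrix.conjTranspose_apply] using h.symm
    set u : Fin r → ℝ := fun b => ∑ j ∈ univ.filter (fun j => τ j = b), (y j * c j) with hu
    have hGsumN : ∀ a', Gsum a' = (N *ᵥ u) a' := by
      intro a'
      simp only [Matrix.mulVec, dotProduct, hu, hGsum]
      rw [← Finset.sum_fiberwise univ τ (fun j => N a' (τ j) * (y j * c j))]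
      refine Finset.sum_congr rfl fun b _ => ?_
      rw [Finset.mul_sum]
      refine Finset.sum_congr rfl fun j hj => ?_
      rw [Finset.mem_filter] at hj
      rw [hj.2]
    have hGfun : G = (1/(lam*(n:ℝ))) • (N *ᵥ u) := by
      funext a'
      rw [hG]
      simp [hGsumN a']
    have hAG : A *ᵥ G = (1/(lam*(n:ℝ))) • u := by
      rw [hGfun, Matrix.mulVec_smul, Matrix.mulVec_mulVec,
        Matrix.nonsing_inv_mul N (Ne.isUnit hN.det_pos.ne'), Matrix.one_mulVec]
    have hub : ∀ b, u b = ε b * ((univ.filter (fun j => τ j = b)).card : ℝ) * θ b := by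
      intro b
      have hcongr : ∀ j ∈ univ.filter (fun j => τ j = b), y j * c j = ε b * θ b := by
        intro j hj
        rw [Finset.mem_filter] at hj
        rw [hform j, hy j, hj.2]
      calc u b = ∑ j ∈ univ.filter (fun j => τ j = b), (ε b * θ b) :=
            Finset.sum_congr rfl hcongr
        _ = ε b * ((univ.filter (fun j => τ j = b)).card : ℝ) * θ b := by
            rw [Finset.sum_const, nsmul_eq_mul]; ring
    have hgrad : ∀ b, phat b * (-(Real.exp (-(ε b * G b)) / (1 + Real.exp (-(ε b * G b))))) * ε b
        + lam * ((A *ᵥ G) b) = 0 := by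
      intro b
      rw [hAG]
      simp only [Pi.smul_apply, smul_eq_mul]
      rw [hub b, hphat b, hθ]
      simp only [Real.exp_neg]
      have he := Real.exp_pos (ε b * G b)
      set e : ℝ := Real.exp (ε b * G b)
      field_simp
      ring
    set d : Fin r → ℝ := fun b => g b - G b with hd
    have hgd : g = fun b => G b + d b := by funext b; simp [hd]
    have hΦ : templateObj N ε phat lam g ≤ templateObj N ε phat lam G :=
      isMinOn_iff.mp hg G (Set.mem_univ G)
    -- quadratic expansion
    have hquadexp : g ⬝ᵥ (A *ᵥ g)
        = G ⬝ᵥ (A *ᵥ G) + 2 * (d ⬝ᵥ (A *ᵥ G)) + d ⬝ᵥ (A *ᵥ d) := by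
      have hgd' : g = G + d := by funext b; simp [hd]
      rw [hgd', Matrix.mulVec_add, add_dotProduct, dotProduct_add,
        dotProduct_add, dotProduct_mulVec_symm A hAsymm G d]
      ring
    have hphat_nonneg : ∀ b, 0 ≤ phat b := by
      intro b; rw [hphat b]; exact div_nonneg (Nat.cast_nonneg _) (Nat.cast_nonneg _)
    have hlog : ∀ b, phat b * logLoss (ε b * G b)
        + phat b * (-(Real.exp (-(ε b * G b)) / (1 + Real.exp (-(ε b * G b)))))
            * (ε b * g b - ε b * G b)
        ≤ phat b * logLoss (ε b * g b) := by
      intro b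
      have := logLoss_first_order (ε b * G b) (ε b * g b)
      have h2 := mul_le_mul_of_nonneg_left this (hphat_nonneg b)
      calc phat b * logLoss (ε b * G b)
            + phat b * (-(Real.exp (-(ε b * G b)) / (1 + Real.exp (-(ε b * G b)))))
              * (ε b * g b - ε b * G b)
          = phat b * (logLoss (ε b * G b)
            + (-(Real.exp (-(ε b * G b)) / (1 + Real.exp (-(ε b * G b)))))
              * (ε b * g b - ε b * G b)) := by ring
        _ ≤ phat b * logLoss (ε b * g b) := h2
    have hsum : ∑ b, (phat b * logLoss (ε b * G b)
        + phat b * (-(Real.exp (-(ε b * G b)) / (1 + Real.exp (-(ε b * G b)))))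
            * (ε b * g b - ε b * G b))
        ≤ ∑ b, phat b * logLoss (ε b * g b) :=
      Finset.sum_le_sum fun b _ => hlog b
    have hzero : ∑ b, (phat b * (-(Real.exp (-(ε b * G b)) / (1 + Real.exp (-(ε b * G b)))))
          * (ε b * g b - ε b * G b) + lam * (d b * (A *ᵥ G) b)) = 0 := by
      apply Finset.sum_eq_zero
      intro b _
      have h := hgrad b
      have hdb : d b = g b - G b := rfl
      linear_combination (g b - G b) * h
    have hdAG : d ⬝ᵥ (A *ᵥ G) = ∑ b, d b * (A *ᵥ G) b := rfl
    have hkey : templateObj N ε phat lam G + (lam/2) * (d ⬝ᵥ (A *ᵥ d))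
        ≤ templateObj N ε phat lam g := by
      simp only [templateObj, ← hA]
      rw [hquadexp]
      rw [Finset.sum_add_distrib] at hsum hzero
      rw [hdAG]
      have hlamsum : ∑ b, lam * (d b * (A *ᵥ G) b) = lam * ∑ b, d b * (A *ᵥ G) b := by
        rw [Finset.mul_sum]
      rw [hlamsum] at hzero
      linarith [hsum, hzero]
    have hquadneg : d ⬝ᵥ (A *ᵥ d) ≤ 0 := by
      have hx : (lam/2) * (d ⬝ᵥ (A *ᵥ d)) ≤ 0 := by linarith [hΦ, hkey]
      by_contra hpos
      push_neg at hpos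
      have hx2 : 0 < (lam/2) * (d ⬝ᵥ (A *ᵥ d)) := mul_pos (by linarith) hpos
      linarith
    have hdzero : d = 0 := by
      by_contra hdne
      have := hApos.dotProduct_mulVec_pos hdne
      have hstar : star d = d := by funext b; simp
      rw [hstar] at this
      linarith
    have hga : g a = G a := by
      have := congrFun hdzero a
      simp only [hd, Pi.zero_apply] at this
      linarith
    rw [hga]
    rfl
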